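/- The map T' : [0,1] → {0,1}^ℤ defined via U' is continuous with respect to the Besicovitch pseudometric, where U'(x) is obtained by partitioning ℕ into intervals [2^{n-1}−1, 2^n−1) for n>0 and filling each such interval [a,b) with 0^{⌊x(b−a)⌋} 1^{⌈(1−x)(b−a)⌉}, and T'(x) = U'(x)^R.U'(x) (the reversal of U'(x) on negative coordinates, U'(x) on nonnegative coordinates). In particular, {0,1}^ℤ with the Besicovitch pseudometric is path-connected from ∞0∞ to ∞1∞. -/

import Mathlib

open Filter

/-- Hamming distance between `x` and `y` on the coordinate interval `[a, b]`. -/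
noncomputable def hamIcc {A : Type*} (x y : ℤ → A) (a b : ℤ) : ℕ :=
  @Finset.card ℤ (@Finset.filter ℤ (fun i => x i ≠ y i) (Classical.decPred _) (Finset.Icc a b))

/-- The Besicovitch pseudodistance on `A^ℤ`. -/
noncomputable def dB {A : Type*} (x y : ℤ → A) : ℝ :=
  atTop.limsup fun n : ℕ => (hamIcc x y (-(n : ℤ)) n : ℝ) / (2 * n + 1)

/-- The Weyl pseudodistance on `A^ℤ`. -/
noncomputable def dW {A : Type*} (x y : ℤ → A) : ℝ :=
  atTop.limsup fun n : ℕ => ⨆ m : ℤ, (hamIcc x y (m - n) (m + n) : ℝ) / (2 * n + 1)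

/-- The shift map. -/
def shiftMap {A : Type*} (x : ℤ → A) : ℤ → A := fun i => x (i + 1)

/-- A subshift: a shift-invariant subset of `A^ℤ` closed in the Cantor topology. -/
def IsSubshift {A : Type*} (X : Set (ℤ → A)) : Prop :=
  (∀ x ∈ X, shiftMap x ∈ X) ∧ (∀ x ∈ X, (fun i => x (i - 1)) ∈ X) ∧
  (∀ x : ℤ → A, (∀ n : ℕ, ∃ y ∈ X, ∀ i : ℤ, |i| ≤ (n : ℤ) → y i = x i) → x ∈ X)

/-- The word `w` occurs in (some point of) `X`. -/
def occursIn {A : Type*} (X : Set (ℤ → A)) {k : ℕ} (w : Fin k → A) : Prop :=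
  ∃ x ∈ X, ∃ i : ℤ, ∀ j : Fin k, x (i + j) = w j

/-- A shift of finite type: defined by a clopen window condition. -/
def IsSFT {A : Type*} (X : Set (ℤ → A)) : Prop :=
  ∃ (k : ℕ) (P : (Fin k → A) → Prop), X = {x | ∀ i : ℤ, P (fun j => x (i + j))}

/-- A sliding block code (cellular automaton when `A = B`) of some radius `r`. -/
def IsSlidingBlock {A B : Type*} (φ : (ℤ → A) → (ℤ → B)) : Prop :=
  ∃ (r : ℕ) (f : (Fin (2 * r + 1) → A) → B), ∀ x i, φ x i = f fun j => x (i - r + j)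

/-- A sofic shift: the image of an SFT under a sliding block code. -/
def IsSofic {A : Type*} (X : Set (ℤ → A)) : Prop :=
  ∃ (B : Type) (_ : Fintype B) (Y : Set (ℤ → B)) (φ : (ℤ → B) → (ℤ → A)),
    IsSFT Y ∧ IsSlidingBlock φ ∧ X = φ '' Y

/-- Topological mixing for shift spaces, in terms of words of the language. -/
def IsMixingShift {A : Type*} (X : Set (ℤ → A)) : Prop :=
  ∀ (k l : ℕ) (u : Fin k → A) (v : Fin l → A), occursIn X u → occursIn X v →
    ∃ N : ℕ, ∀ n ≥ N, ∃ x ∈ X, ∃ i : ℤ,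
      (∀ j : Fin k, x (i + j) = u j) ∧ (∀ j : Fin l, x (i + k + n + j) = v j)

/-- Topological entropy of a shift space. -/
noncomputable def shiftEntropy {A : Type*} (X : Set (ℤ → A)) : ℝ :=
  atTop.limsup fun n : ℕ => Real.log (Set.ncard {w : Fin n → A | occursIn X w}) / n

/-- The periodic configuration `∞w∞` with period word `w`. -/
def perPt {A : Type*} {n : ℕ} (hn : 0 < n) (w : Fin n → A) : ℤ → A := fun i =>
  w ⟨(i % (n : ℤ)).toNat, by
    have h1 : (0 : ℤ) < (n : ℤ) := by exact_mod_cast hn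
    have h2 := Int.emod_nonneg i (by omega : (n : ℤ) ≠ 0)
    have h3 := Int.emod_lt_of_pos i h1
    omega⟩

/-- The density coding `U' : [0,1] → {0,1}^ℕ`: the dyadic interval of `ℕ` containing `n`
has left endpoint `2^(Nat.log 2 (n+1)) - 1` and length `L = 2^(Nat.log 2 (n+1))`; it is
filled with `⌊x·L⌋` zeros (`false`) followed by ones (`true`). -/
noncomputable def Uprime (x : ℝ) (n : ℕ) : Bool :=
  decide (⌊x * 2 ^ Nat.log 2 (n + 1)⌋ ≤ ((n : ℤ) + 1 - 2 ^ Nat.log 2 (n + 1)))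

/-- The two-sided version `T'(x) = U'(x)^R.U'(x)`. -/
noncomputable def Tprime (x : ℝ) : ℤ → Bool := fun i =>
  if 0 ≤ i then Uprime x i.toNat else Uprime x (-i - 1).toNat

/-- The one-sided Besicovitch pseudodistance. -/
noncomputable def dB1 {A : Type*} (u v : ℕ → A) : ℝ :=
  atTop.limsup fun n : ℕ =>
    ((@Finset.filter ℕ (fun i => u i ≠ v i) (Classical.decPred _) (Finset.range n)).card : ℝ) / n

-- fiber count
lemma fiber_card_le (x y : ℝ) (N k : ℕ) :
    ((((Finset.range N).filter (fun m => Uprime x m ≠ Uprime y m)).filter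
        (fun m => Nat.log 2 (m+1) = k)).card : ℤ)
      ≤ (⌊x * 2 ^ k⌋ - ⌊y * 2 ^ k⌋).natAbs := by
  set a := ⌊x * (2:ℝ) ^ k⌋
  set b := ⌊y * (2:ℝ) ^ k⌋
  have hcard : (((Finset.range N).filter (fun m => Uprime x m ≠ Uprime y m)).filter
        (fun m => Nat.log 2 (m+1) = k)).card
      ≤ (Finset.Ico (min a b) (max a b)).card := by
    refine Finset.card_le_card_of_injOn (fun m => (m : ℤ) + 1 - 2 ^ k) ?_ ?_
    · intro m hm
      simp only [Finset.mem_coe, Finset.mem_filter, Finset.mem_range] at hm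
      obtain ⟨⟨-, hne⟩, hk⟩ := hm
      rw [Uprime, Uprime, hk] at hne
      simp only [ne_eq, decide_eq_decide] at hne
      simp only [Finset.mem_coe, Finset.mem_Ico]
      omega
    · intro m _ m' _ h
      simpa using h
  rw [Int.card_Ico] at hcard
  omega

lemma dcount_le (x y : ℝ) (δ : ℝ) (hδ : |x - y| ≤ δ) (N : ℕ) (hN : 1 ≤ N) :
    ((((Finset.range N).filter (fun m => Uprime x m ≠ Uprime y m)).card : ℝ))
      ≤ 2 * δ * N + (Nat.log 2 N + 1) := by
  have hδ0 : 0 ≤ δ := le_trans (abs_nonneg _) hδ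
  set K := Nat.log 2 N with hK
  have hfib : ((Finset.range N).filter (fun m => Uprime x m ≠ Uprime y m)).card
      = ∑ k ∈ Finset.range (K + 1),
        (((Finset.range N).filter (fun m => Uprime x m ≠ Uprime y m)).filter
          (fun m => Nat.log 2 (m+1) = k)).card := by
    apply Finset.card_eq_sum_card_fiberwise
    intro m hm
    simp only [Finset.mem_coe, Finset.mem_filter, Finset.mem_range] at hm ⊢
    have : Nat.log 2 (m + 1) ≤ K := Nat.log_mono_right (by omega)
    omega
  -- per-fiber real bound
  have hterm : ∀ k, ((((Finset.range N).filter (fun m => Uprime x m ≠ Uprime y m)).filter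
          (fun m => Nat.log 2 (m+1) = k)).card : ℝ) ≤ δ * 2 ^ k + 1 := by
    intro k
    have h1 := fiber_card_le x y N k
    have h2 : ((⌊x * (2:ℝ) ^ k⌋ - ⌊y * (2:ℝ) ^ k⌋).natAbs : ℝ) ≤ δ * 2 ^ k + 1 := by
      rw [Nat.cast_natAbs]
      push_cast
      have hx1 : (⌊x * (2:ℝ) ^ k⌋ : ℝ) ≤ x * 2 ^ k := Int.floor_le _
      have hx2 : x * 2 ^ k - 1 < ⌊x * (2:ℝ) ^ k⌋ := Int.sub_one_lt_floor _
      have hy1 : (⌊y * (2:ℝ) ^ k⌋ : ℝ) ≤ y * 2 ^ k := Int.floor_le _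
      have hy2 : y * 2 ^ k - 1 < ⌊y * (2:ℝ) ^ k⌋ := Int.sub_one_lt_floor _
      have hd : |x * 2 ^ k - y * 2 ^ k| ≤ δ * 2 ^ k := by
        rw [← sub_mul, abs_mul, abs_of_nonneg (by positivity : (0:ℝ) ≤ (2:ℝ)^k)]
        exact mul_le_mul_of_nonneg_right hδ (by positivity)
      rw [abs_le] at hd
      rw [abs_le]
      constructor <;> push_cast <;> linarith
    calc ((((Finset.range N).filter (fun m => Uprime x m ≠ Uprime y m)).filter
          (fun m => Nat.log 2 (m+1) = k)).card : ℝ)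
        ≤ ((⌊x * (2:ℝ) ^ k⌋ - ⌊y * (2:ℝ) ^ k⌋).natAbs : ℝ) := by exact_mod_cast h1
      _ ≤ _ := h2
  have hgeom : ∑ k ∈ Finset.range (K + 1), ((2:ℝ)) ^ k = 2 ^ (K + 1) - 1 := by
    rw [geom_sum_eq (by norm_num)]
    ring
  have hpow : ((2:ℝ)) ^ (K + 1) ≤ 2 * N := by
    have := Nat.pow_log_le_self 2 (show N ≠ 0 by omega)
    have : (2:ℝ) ^ K ≤ N := by exact_mod_cast this
    rw [pow_succ]
    linarith
  calc (((Finset.range N).filter (fun m => Uprime x m ≠ Uprime y m)).card : ℝ)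
      = ∑ k ∈ Finset.range (K + 1),
        ((((Finset.range N).filter (fun m => Uprime x m ≠ Uprime y m)).filter
          (fun m => Nat.log 2 (m+1) = k)).card : ℝ) := by rw [hfib]; push_cast; ring
    _ ≤ ∑ k ∈ Finset.range (K + 1), (δ * 2 ^ k + 1) :=
        Finset.sum_le_sum fun k _ => hterm k
    _ = δ * (2 ^ (K + 1) - 1) + (K + 1) := by
        rw [Finset.sum_add_distrib, ← Finset.mul_sum, hgeom]; simp
    _ ≤ 2 * δ * N + (K + 1) := by nlinarith

lemma tprime_pos (x : ℝ) (i : ℤ) (h : 0 ≤ i) : Tprime x i = Uprime x i.toNat := by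
  simp [Tprime, h]

lemma tprime_neg (x : ℝ) (i : ℤ) (h : ¬ 0 ≤ i) : Tprime x i = Uprime x (-i - 1).toNat := by
  simp [Tprime, h]

lemma hamIcc_Tprime_le (x y : ℝ) (n : ℕ) :
    hamIcc (Tprime x) (Tprime y) (-(n:ℤ)) n ≤
      2 * ((Finset.range (n+1)).filter (fun m => Uprime x m ≠ Uprime y m)).card := by
  rw [hamIcc, Finset.filter_congr_decidable]
  set s := (Finset.Icc (-(n:ℤ)) n).filter (fun i => Tprime x i ≠ Tprime y i) with hs
  have hmem : ∀ i ∈ s, -(n:ℤ) ≤ i ∧ i ≤ n ∧ Tprime x i ≠ Tprime y i := by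
    intro i hi
    rw [hs, Finset.mem_filter, Finset.mem_Icc] at hi
    tauto
  set t := (Finset.range (n+1)).filter (fun m => Uprime x m ≠ Uprime y m) with ht
  have hsplit := Finset.card_filter_add_card_filter_not
    (s := s) (p := fun i : ℤ => 0 ≤ i)
  rw [← hsplit, two_mul]
  apply Nat.add_le_add
  · refine Finset.card_le_card_of_injOn (fun i => i.toNat) ?_ ?_
    · intro i hi
      rw [Finset.mem_coe, Finset.mem_filter] at hi
      obtain ⟨hi, hi0⟩ := hi
      obtain ⟨hl, hr, hne⟩ := hmem i hi
      rw [ht, Finset.mem_coe, Finset.mem_filter, Finset.mem_range]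
      dsimp only
      refine ⟨by omega, ?_⟩
      rwa [tprime_pos x i hi0, tprime_pos y i hi0] at hne
    · intro i hi j hj hij
      simp only [Finset.coe_filter, Set.mem_setOf_eq] at hi hj
      dsimp only at hij
      omega
  · refine Finset.card_le_card_of_injOn (fun i => (-i - 1).toNat) ?_ ?_
    · intro i hi
      rw [Finset.mem_coe, Finset.mem_filter] at hi
      obtain ⟨hi, hi0⟩ := hi
      obtain ⟨hl, hr, hne⟩ := hmem i hi
      rw [ht, Finset.mem_coe, Finset.mem_filter, Finset.mem_range]
      dsimp only
      refine ⟨by omega, ?_⟩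
      rwa [tprime_neg x i hi0, tprime_neg y i hi0] at hne
    · intro i hi j hj hij
      simp only [Finset.coe_filter, Set.mem_setOf_eq] at hi hj
      dsimp only at hij
      omega

lemma log_term_tendsto :
    Tendsto (fun n : ℕ => (2 * (Nat.log 2 (n+1) : ℝ) + 2) / (2 * n + 1)) atTop (nhds 0) := by
  have hlog1 : Tendsto (fun n : ℕ => Real.log (n+1) / ((n:ℝ)+1)) atTop (nhds 0) := by
    have h0 : Tendsto (fun x : ℝ => Real.log x / x) atTop (nhds 0) := by
      simpa [Function.comp] using Real.isLittleO_log_id_atTop.tendsto_div_nhds_zero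
    have h1 : Tendsto (fun n : ℕ => ((n:ℝ) + 1)) atTop atTop :=
      tendsto_atTop_add_const_right _ _ tendsto_natCast_atTop_atTop
    exact h0.comp h1
  have hratio : Tendsto (fun n : ℕ => ((n:ℝ)+1) / n) atTop (nhds 1) := by
    have : Tendsto (fun n : ℕ => 1 + 1/(n:ℝ)) atTop (nhds (1 + 0)) :=
      tendsto_const_nhds.add tendsto_one_div_atTop_nhds_zero_nat
    apply Tendsto.congr' _ (by simpa using this)
    filter_upwards [eventually_ge_atTop 1] with n hn
    have : (n:ℝ) ≠ 0 := by positivity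
    field_simp
  have hlog : Tendsto (fun n : ℕ => Real.log (n+1) / n) atTop (nhds 0) := by
    have := hlog1.mul hratio
    rw [zero_mul] at this
    apply Tendsto.congr' _ this
    filter_upwards [eventually_ge_atTop 1] with n hn
    have h0 : (n:ℝ) ≠ 0 := by positivity
    have h1 : (n:ℝ) + 1 ≠ 0 := by positivity
    field_simp
  have hupper : Tendsto (fun n : ℕ => (2 / Real.log 2) * (Real.log (n+1) / n) + 2 * (1/(n:ℝ)))
      atTop (nhds 0) := by
    have := (hlog.const_mul (2 / Real.log 2)).add
      (tendsto_one_div_atTop_nhds_zero_nat.const_mul 2)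
    simpa using this
  apply tendsto_of_tendsto_of_tendsto_of_le_of_le' tendsto_const_nhds hupper
  · filter_upwards with n
    positivity
  · filter_upwards [eventually_ge_atTop 1] with n hn
    have hn0 : (0:ℝ) < n := by exact_mod_cast hn
    have hlog2 : (0:ℝ) < Real.log 2 := Real.log_pos (by norm_num)
    have hk : (Nat.log 2 (n+1) : ℝ) ≤ Real.log (n+1) / Real.log 2 := by
      rw [le_div_iff₀ hlog2]
      have h2 : (2:ℝ) ^ Nat.log 2 (n+1) ≤ ((n:ℝ)+1) := by
        exact_mod_cast Nat.pow_log_le_self 2 (show n+1 ≠ 0 by omega)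
      calc (Nat.log 2 (n+1) : ℝ) * Real.log 2 = Real.log (2 ^ Nat.log 2 (n+1)) := by
            rw [Real.log_pow]
        _ ≤ Real.log ((n:ℝ)+1) := Real.log_le_log (by positivity) h2
    have step1 : (2 * (Nat.log 2 (n+1) : ℝ) + 2) / (2 * n + 1)
        ≤ (2 * (Nat.log 2 (n+1) : ℝ) + 2) / n := by
      apply div_le_div_of_nonneg_left (by positivity) hn0 (by linarith)
    refine step1.trans ?_
    have heq : (2 / Real.log 2) * (Real.log (n+1) / n) + 2 * (1/(n:ℝ))
        = (2 * (Real.log (n+1) / Real.log 2) + 2) / n := by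
      field_simp
    rw [heq]
    exact (div_le_div_iff_of_pos_right hn0).mpr (by linarith)


/-- `T'` is `dB`-continuous on `[0,1]`, and provides a path
from `∞1∞` (at parameter 0) to `∞0∞` (at parameter 1), connecting the two
unary configurations in the Besicovitch space. -/
theorem Tprime_continuous_dB :
    (∀ x ∈ Set.Icc (0 : ℝ) 1, ∀ ε > (0 : ℝ), ∃ δ > (0 : ℝ),
      ∀ y ∈ Set.Icc (0 : ℝ) 1, |x - y| < δ → dB (Tprime x) (Tprime y) < ε) ∧
    Tprime 0 = (fun _ => true) ∧ Tprime 1 = (fun _ => false) := by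
  refine ⟨?_, ?_, ?_⟩
  · intro x _ ε hε
    refine ⟨ε/8, by linarith, ?_⟩
    intro y _ hxy
    have hδ : |x - y| ≤ ε/8 := le_of_lt hxy
    have hub : ∀ᶠ n : ℕ in atTop,
        (hamIcc (Tprime x) (Tprime y) (-(n:ℤ)) n : ℝ) / (2 * n + 1) ≤ ε/2 + ε/4 := by
      filter_upwards [log_term_tendsto.eventually_lt_const (show (0:ℝ) < ε/4 by linarith)]
        with n hv
      have hn1 : (0:ℝ) < 2 * n + 1 := by positivity
      have h1 : (hamIcc (Tprime x) (Tprime y) (-(n:ℤ)) n : ℝ)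
          ≤ 2 * (((Finset.range (n+1)).filter (fun m => Uprime x m ≠ Uprime y m)).card : ℝ) := by
        exact_mod_cast hamIcc_Tprime_le x y n
      have h2 := dcount_le x y (ε/8) hδ (n+1) (by omega)
      have h3 : (hamIcc (Tprime x) (Tprime y) (-(n:ℤ)) n : ℝ)
          ≤ 4 * (ε/8) * (n+1) + (2 * (Nat.log 2 (n+1) : ℝ) + 2) := by
        push_cast at h2 ⊢
        nlinarith [h1, h2]
      calc (hamIcc (Tprime x) (Tprime y) (-(n:ℤ)) n : ℝ) / (2 * n + 1)
          ≤ (4 * (ε/8) * (n+1) + (2 * (Nat.log 2 (n+1) : ℝ) + 2)) / (2 * n + 1) :=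
            (div_le_div_iff_of_pos_right hn1).mpr h3
        _ = 4 * (ε/8) * (n+1) / (2*n+1) + (2 * (Nat.log 2 (n+1) : ℝ) + 2) / (2*n+1) := by
            rw [add_div]
        _ ≤ ε/2 + ε/4 := by
            apply add_le_add
            · rw [div_le_iff₀ hn1]; nlinarith
            · exact le_of_lt hv
    have hle : dB (Tprime x) (Tprime y) ≤ ε/2 + ε/4 := by
      rw [dB]
      apply Filter.limsup_le_of_le _ hub
      exact Filter.IsBoundedUnder.isCoboundedUnder_le
        ⟨0, Filter.eventually_map.2 (Eventually.of_forall (fun n => by positivity))⟩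
    linarith
  · funext i
    have h0 : ∀ m : ℕ, Uprime 0 m = true := by
      intro m
      have h := Nat.pow_log_le_self 2 (show m+1 ≠ 0 by omega)
      have h2 : ((2:ℤ))^(Nat.log 2 (m+1)) ≤ (m:ℤ)+1 := by exact_mod_cast h
      simp only [Uprime, zero_mul, Int.floor_zero, decide_eq_true_eq]
      omega
    simp only [Tprime]
    split_ifs <;> exact h0 _
  · funext i
    have h1 : ∀ m : ℕ, Uprime 1 m = false := by
      intro m
      have h := Nat.lt_pow_succ_log_self (show 1 < 2 by norm_num) (m+1)
      have h2 : (m:ℤ)+1 < 2^(Nat.log 2 (m+1)+1) := by exact_mod_cast h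
      rw [pow_succ] at h2
      simp only [Uprime, one_mul]
      have hf : ⌊(2:ℝ)^(Nat.log 2 (m+1))⌋ = 2^(Nat.log 2 (m+1)) := by
        rw [show ((2:ℝ))^(Nat.log 2 (m+1)) = (((2^(Nat.log 2 (m+1)) : ℤ)):ℝ) by push_cast; ring,
          Int.floor_intCast]
      rw [hf]
      simp only [decide_eq_false_iff_not, not_le]
      omega
    simp only [Tprime]
    split_ifs <;> exact h1 _
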